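/- Let X and Y be real Hilbert spaces, F : X → Y a map that is Fréchet differentiable at a point x_i ∈ X with derivative F'(x_i) (a bounded linear operator from X to Y). Let x ∈ X, y, y^δ ∈ Y and δ ≥ 0, c_tc ≥ 0 be such that F(x) = y, ‖y^δ − y‖ ≤ δ, and the tangential cone estimate ‖F(x) − F(x_i) − F'(x_i)(x − x_i)‖ ≤ c_tc ‖F(x) − F(x_i)‖ holds. Then for every w ∈ Y, setting u := F'(x_i)*w, α := ⟨u, x_i⟩ − ⟨w, F(x_i) − y^δ⟩ and ξ := ‖w‖ (c_tc (‖F(x_i) − y^δ‖ + δ) + δ), one has |⟨u, x⟩ − α| ≤ ξ; that is, x lies in the stripe H(u, α, ξ). -/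
import Mathlib


open RealInnerProductSpace

/-- Nonlinear stripe containment: if `F(x) = y`, `‖y^δ − y‖ ≤ δ` and the
tangential cone estimate holds at `x_i`, then `x` lies in the stripe
`H(u, α, ξ)` with `u = F'(x_i)*w`, `α = ⟪u, x_i⟫ − ⟪w, F(x_i) − y^δ⟫` and
`ξ = ‖w‖ (c_tc(‖F(x_i) − y^δ‖ + δ) + δ)`. -/
theorem solution_in_stripe_nonlinear
    {X Y : Type*} [NormedAddCommGroup X] [InnerProductSpace ℝ X] [CompleteSpace X]
    [NormedAddCommGroup Y] [InnerProductSpace ℝ Y] [CompleteSpace Y]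
    (F : X → Y) (xi : X) (F' : X →L[ℝ] Y) (hF : HasFDerivAt F F' xi)
    (x : X) (y yδ : Y) (δ ctc : ℝ) (hδ : 0 ≤ δ) (hctc : 0 ≤ ctc)
    (hsol : F x = y) (hnoise : ‖yδ - y‖ ≤ δ)
    (htc : ‖F x - F xi - F' (x - xi)‖ ≤ ctc * ‖F x - F xi‖)
    (w : Y) :
    |⟪(ContinuousLinearMap.adjoint F') w, x⟫ -
        (⟪(ContinuousLinearMap.adjoint F') w, xi⟫ - ⟪w, F xi - yδ⟫)| ≤
      ‖w‖ * (ctc * (‖F xi - yδ‖ + δ) + δ) := by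
  have key : ⟪(ContinuousLinearMap.adjoint F') w, x⟫ -
      (⟪(ContinuousLinearMap.adjoint F') w, xi⟫ - ⟪w, F xi - yδ⟫) =
      ⟪w, -(F x - F xi - F' (x - xi)) + (y - yδ)⟫ := by
    rw [ContinuousLinearMap.adjoint_inner_left, ContinuousLinearMap.adjoint_inner_left]
    rw [← inner_sub_right, ← inner_sub_right]
    congr 1
    rw [map_sub, ← hsol]
    abel
  rw [key]
  calc |⟪w, -(F x - F xi - F' (x - xi)) + (y - yδ)⟫|
      ≤ ‖w‖ * ‖-(F x - F xi - F' (x - xi)) + (y - yδ)‖ := abs_real_inner_le_norm _ _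
    _ ≤ ‖w‖ * (ctc * (‖F xi - yδ‖ + δ) + δ) := by
        apply mul_le_mul_of_nonneg_left _ (norm_nonneg w)
        calc ‖-(F x - F xi - F' (x - xi)) + (y - yδ)‖
            ≤ ‖-(F x - F xi - F' (x - xi))‖ + ‖y - yδ‖ := norm_add_le _ _
          _ = ‖F x - F xi - F' (x - xi)‖ + ‖y - yδ‖ := by rw [norm_neg]
          _ ≤ ctc * ‖F x - F xi‖ + δ := by
              have : ‖y - yδ‖ ≤ δ := by rwa [norm_sub_rev] at hnoise
              linarith
          _ ≤ ctc * (‖F xi - yδ‖ + δ) + δ := by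
              have h1 : ‖F x - F xi‖ ≤ ‖F xi - yδ‖ + δ := by
                have : F x - F xi = -(F xi - yδ) + -(yδ - y) := by rw [hsol]; abel
                rw [this]
                calc ‖-(F xi - yδ) + -(yδ - y)‖ ≤ ‖-(F xi - yδ)‖ + ‖-(yδ - y)‖ :=
                      norm_add_le _ _
                  _ ≤ ‖F xi - yδ‖ + δ := by rw [norm_neg, norm_neg]; linarith
              nlinarith [norm_nonneg (F x - F xi)]
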